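/- Let R/I be an artinian Gorenstein algebra for which multiplication by a general linear form L from degree 1 to degree 2 is injective, with h_1 = h_2 = r and socle degree e ≥ 4. Then h_i = r for all i = 1,...,e-1. -/

import Mathlib

open MvPolynomial

/-- The degree-`d` graded piece of the quotient `R/I`, as the image of the
homogeneous polynomials of degree `d`. -/
noncomputable def quotPiece (k : Type*) [Field k] (σ : Type*)
    (I : Ideal (MvPolynomial σ k)) (d : ℕ) :
    Submodule k (MvPolynomial σ k ⧸ I) :=
  Submodule.map (Ideal.Quotient.mkₐ k I).toLinearMap
    (MvPolynomial.homogeneousSubmodule σ k d)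

/-- The Hilbert function of the standard graded algebra `R/I`. -/
noncomputable def hilb (k : Type*) [Field k] (σ : Type*)
    (I : Ideal (MvPolynomial σ k)) (d : ℕ) : ℕ :=
  Module.finrank k (quotPiece k σ I d)

/-- `I` is a homogeneous ideal with respect to the standard grading. -/
def IsHomog (k : Type*) [Field k] (σ : Type*) (I : Ideal (MvPolynomial σ k)) : Prop :=
  ∀ p ∈ I, ∀ d : ℕ, MvPolynomial.homogeneousComponent d p ∈ I

/-- `I` contains no nonzero linear form. -/
def NoLinearForms (k : Type*) [Field k] (σ : Type*) (I : Ideal (MvPolynomial σ k)) : Prop :=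
  ∀ p : MvPolynomial σ k, p.IsHomogeneous 1 → p ∈ I → p = 0

/-- `I` is generated by homogeneous forms of degree 2. -/
def GenByQuadrics (k : Type*) [Field k] (σ : Type*) (I : Ideal (MvPolynomial σ k)) : Prop :=
  ∃ S : Set (MvPolynomial σ k), (∀ p ∈ S, p.IsHomogeneous 2) ∧ I = Ideal.span S

/-- The graded algebra `R/I` is artinian: its Hilbert function eventually vanishes. -/
def ArtinianHF (k : Type*) [Field k] (σ : Type*) (I : Ideal (MvPolynomial σ k)) : Prop :=
  ∃ N : ℕ, ∀ d : ℕ, N ≤ d → hilb k σ I d = 0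

/-- The socle of `R/I`: the annihilator of the irrelevant maximal ideal. -/
noncomputable def socle (k : Type*) [Field k] (σ : Type*) (I : Ideal (MvPolynomial σ k)) :
    Submodule k (MvPolynomial σ k ⧸ I) :=
  ⨅ i : σ, LinearMap.ker (LinearMap.mulLeft k (Ideal.Quotient.mk I (MvPolynomial.X i)))

/-- An artinian graded algebra `R/I` is Gorenstein iff its socle is 1-dimensional,
i.e. its Cohen-Macaulay type is 1. -/
def GorensteinHF (k : Type*) [Field k] (σ : Type*) (I : Ideal (MvPolynomial σ k)) : Prop :=
  Module.finrank k (socle k σ I) = 1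

/-- `e` is the socle degree of `R/I`: the top degree where the Hilbert function
does not vanish. -/
def IsSocleDegree (k : Type*) [Field k] (σ : Type*) (I : Ideal (MvPolynomial σ k))
    (e : ℕ) : Prop :=
  hilb k σ I e ≠ 0 ∧ ∀ d : ℕ, e < d → hilb k σ I d = 0

/-- `I` contains a regular sequence consisting of `r` quadrics. -/
def ContainsRegSeqQuadrics (k : Type*) [Field k] (r : ℕ)
    (I : Ideal (MvPolynomial (Fin r) k)) : Prop :=
  ∃ Q : Fin r → MvPolynomial (Fin r) k,
    (∀ i, (Q i).IsHomogeneous 2) ∧ (∀ i, Q i ∈ I) ∧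
      RingTheory.Sequence.IsRegular (MvPolynomial (Fin r) k) (List.ofFn Q)

/-- An artinian Gorenstein standard graded algebra presented by quadrics. -/
def AGQuad (k : Type*) [Field k] (σ : Type*) (I : Ideal (MvPolynomial σ k)) : Prop :=
  IsHomog k σ I ∧ NoLinearForms k σ I ∧ GenByQuadrics k σ I ∧
    ArtinianHF k σ I ∧ GorensteinHF k σ I

/-- The linear form with coefficient vector `c`. -/
noncomputable def linForm (k : Type*) [Field k] (r : ℕ) (c : Fin r → k) :
    MvPolynomial (Fin r) k :=
  ∑ i, MvPolynomial.C (c i) * MvPolynomial.X i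

/-- The degree-2 part of an ideal, as a `k`-vector space. -/
noncomputable def quadPart (k : Type*) [Field k] (σ : Type*)
    (I : Ideal (MvPolynomial σ k)) : Submodule k (MvPolynomial σ k) :=
  Submodule.restrictScalars k I ⊓ MvPolynomial.homogeneousSubmodule σ k 2

set_option maxHeartbeats 1000000
set_option synthInstance.maxHeartbeats 400000

section Aux

variable {k : Type*} [Field k] {r : ℕ} {I : Ideal (MvPolynomial (Fin r) k)}

lemma mem_quotPiece_iff {d : ℕ} {x : MvPolynomial (Fin r) k ⧸ I} :
    x ∈ quotPiece k (Fin r) I d ↔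
      ∃ p : MvPolynomial (Fin r) k, p.IsHomogeneous d ∧ Ideal.Quotient.mk I p = x := by
  simp only [quotPiece, Submodule.mem_map, AlgHom.toLinearMap_apply, Ideal.Quotient.mkₐ_eq_mk,
    mem_homogeneousSubmodule]

instance quotPiece_fd (d : ℕ) : FiniteDimensional k (quotPiece k (Fin r) I d) := by
  have h1 : homogeneousSubmodule (Fin r) k d ≤ restrictTotalDegree (Fin r) k d := fun p hp =>
    (mem_restrictTotalDegree _ _ _).mpr ((mem_homogeneousSubmodule _ _).mp hp).totalDegree_le
  have : FiniteDimensional k (homogeneousSubmodule (Fin r) k d) :=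
    Submodule.finiteDimensional_of_le h1
  exact Module.Finite.map _ _

lemma quotPiece_bot {d : ℕ} (h : hilb k (Fin r) I d = 0) :
    quotPiece k (Fin r) I d = ⊥ :=
  Submodule.finrank_eq_zero.mp h

lemma mul_mem_quotPiece {i j : ℕ} {x y : MvPolynomial (Fin r) k ⧸ I}
    (hx : x ∈ quotPiece k (Fin r) I i) (hy : y ∈ quotPiece k (Fin r) I j) :
    x * y ∈ quotPiece k (Fin r) I (i + j) := by
  rw [mem_quotPiece_iff] at hx hy ⊢
  obtain ⟨p, hp, rfl⟩ := hx
  obtain ⟨q, hq, rfl⟩ := hy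
  exact ⟨p * q, hp.mul hq, map_mul _ _ _⟩

lemma quotPiece_disjoint (hhom : IsHomog k (Fin r) I) {d d' : ℕ} (hne : d ≠ d')
    {x : MvPolynomial (Fin r) k ⧸ I} (h : x ∈ quotPiece k (Fin r) I d)
    (h' : x ∈ quotPiece k (Fin r) I d') : x = 0 := by
  rw [mem_quotPiece_iff] at h h'
  obtain ⟨p, hp, rfl⟩ := h
  obtain ⟨q, hq, hqx⟩ := h'
  have hsub : q - p ∈ I := (Ideal.Quotient.mk_eq_mk_iff_sub_mem q p).mp hqx
  have hcomp := hhom _ hsub d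
  rw [map_sub, homogeneousComponent_of_mem ((mem_homogeneousSubmodule _ _).mpr hq),
    homogeneousComponent_of_mem ((mem_homogeneousSubmodule _ _).mpr hp)] at hcomp
  rw [if_neg hne, if_pos rfl, zero_sub] at hcomp
  rw [Ideal.Quotient.eq_zero_iff_mem]
  simpa using neg_mem hcomp

lemma socle_eq_top_piece {e : ℕ} (hgor : GorensteinHF k (Fin r) I)
    (he : IsSocleDegree k (Fin r) I e) :
    socle k (Fin r) I = quotPiece k (Fin r) I e ∧ hilb k (Fin r) I e = 1 := by
  have hgor' : Module.finrank k (socle k (Fin r) I) = 1 := hgor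
  have hfinsoc : FiniteDimensional k (socle k (Fin r) I) :=
    Module.finite_of_finrank_pos (by rw [hgor']; norm_num)
  have hle : quotPiece k (Fin r) I e ≤ socle k (Fin r) I := by
    intro x hx
    rw [socle, Submodule.mem_iInf]
    intro l
    rw [LinearMap.mem_ker, LinearMap.mulLeft_apply]
    have hXl : Ideal.Quotient.mk I (X l) ∈ quotPiece k (Fin r) I 1 :=
      mem_quotPiece_iff.mpr ⟨X l, isHomogeneous_X _ _, rfl⟩
    have hmem := mul_mem_quotPiece hXl hx
    rw [quotPiece_bot (he.2 (1 + e) (by omega))] at hmem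
    simpa using hmem
  have heq : quotPiece k (Fin r) I e = socle k (Fin r) I :=
    Submodule.eq_of_le_of_finrank_le hle
      (by rw [hgor']; exact Nat.one_le_iff_ne_zero.mpr he.1)
  exact ⟨heq.symm, by unfold hilb; rw [heq]; exact hgor'⟩

lemma hilb_le_dual (hhom : IsHomog k (Fin r) I) {e : ℕ}
    (hgor : GorensteinHF k (Fin r) I) (he : IsSocleDegree k (Fin r) I e)
    {i : ℕ} (hie : i ≤ e) :
    hilb k (Fin r) I i ≤ hilb k (Fin r) I (e - i) := by
  classical
  obtain ⟨hsoc, hhe⟩ := socle_eq_top_piece hgor he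
  set A := MvPolynomial (Fin r) k ⧸ I with hA
  have hmul : ∀ (a : quotPiece k (Fin r) I i) (b : quotPiece k (Fin r) I (e - i)),
      (a : A) * (b : A) ∈ quotPiece k (Fin r) I e := fun a b => by
    have := mul_mem_quotPiece a.2 b.2
    rwa [Nat.add_sub_cancel' hie] at this
  let Φ : quotPiece k (Fin r) I i →ₗ[k]
      (quotPiece k (Fin r) I (e - i) →ₗ[k] quotPiece k (Fin r) I e) :=
    { toFun := fun a =>
        { toFun := fun b => ⟨(a : A) * (b : A), hmul a b⟩
          map_add' := fun b c => by ext; simp [mul_add]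
          map_smul' := fun m b => by ext; simp [mul_smul_comm] }
      map_add' := fun a c => by ext b; simp [add_mul]
      map_smul' := fun m a => by ext b; simp [smul_mul_assoc] }
  have hker : ∀ a, Φ a = 0 → a = 0 := by
    intro a ha
    by_contra hne
    have hane : (a : A) ≠ 0 := fun h => hne (Subtype.ext h)
    set P : ℕ → Prop := fun j => ∃ c, c ∈ quotPiece k (Fin r) I j ∧ (a : A) * c ≠ 0 with hP
    have hP0 : P 0 :=
      ⟨1, mem_quotPiece_iff.mpr ⟨1, isHomogeneous_one _ _, map_one _⟩, by simpa using hane⟩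
    have hPle : ∀ m, P m → m ≤ e := by
      intro m hm
      by_contra h
      obtain ⟨c, hc, hac⟩ := hm
      rw [quotPiece_bot (he.2 m (by omega))] at hc
      rw [Submodule.mem_bot] at hc
      rw [hc, mul_zero] at hac
      exact hac rfl
    set j := Nat.findGreatest P e with hj
    have hPj : P j := Nat.findGreatest_spec (Nat.zero_le e) hP0
    have hnot : ¬ P (j + 1) := by
      by_cases h : j + 1 ≤ e
      · exact Nat.findGreatest_is_greatest (Nat.lt_succ_self _) h
      · exact fun hp => h (hPle _ hp)
    obtain ⟨c, hc, hac⟩ := hPj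
    have hsocmem : (a : A) * c ∈ socle k (Fin r) I := by
      rw [socle, Submodule.mem_iInf]
      intro l
      rw [LinearMap.mem_ker, LinearMap.mulLeft_apply]
      have hXl : Ideal.Quotient.mk I (X l) ∈ quotPiece k (Fin r) I 1 :=
        mem_quotPiece_iff.mpr ⟨X l, isHomogeneous_X _ _, rfl⟩
      have h1 : Ideal.Quotient.mk I (X l) * c ∈ quotPiece k (Fin r) I (j + 1) := by
        have := mul_mem_quotPiece hXl hc
        rwa [Nat.add_comm] at this
      have h2 : (a : A) * (Ideal.Quotient.mk I (X l) * c) = 0 := by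
        by_contra h
        exact hnot ⟨_, h1, h⟩
      calc Ideal.Quotient.mk I (X l) * ((a : A) * c)
          = (a : A) * (Ideal.Quotient.mk I (X l) * c) := by ring
        _ = 0 := h2
    rw [hsoc] at hsocmem
    have hij : (a : A) * c ∈ quotPiece k (Fin r) I (i + j) := mul_mem_quotPiece a.2 hc
    have hije : i + j ≠ e := by
      intro h
      have hj' : j = e - i := by omega
      rw [hj'] at hc
      have h0 : Φ a ⟨c, hc⟩ = 0 := by rw [ha]; rfl
      have : (a : A) * c = 0 := congrArg Subtype.val h0
      exact hac this
    exact hac (quotPiece_disjoint hhom hije hij hsocmem)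
  have hinj : Function.Injective Φ :=
    (injective_iff_map_eq_zero Φ).mpr hker
  have hle := LinearMap.finrank_le_finrank_of_injective hinj
  rw [Module.finrank_linearMap] at hle
  calc hilb k (Fin r) I i ≤ hilb k (Fin r) I (e - i) * hilb k (Fin r) I e := hle
    _ = hilb k (Fin r) I (e - i) := by rw [hhe, mul_one]

lemma degree_add' (x y : Fin r →₀ ℕ) : (x + y).degree = x.degree + y.degree := by
  simp [Finsupp.degree_eq_weight_one, map_add]

lemma piece_le_map {e : ℕ} (he : IsSocleDegree k (Fin r) I e)
    (h1 : hilb k (Fin r) I 1 = r) (h2 : hilb k (Fin r) I 2 = r)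
    {L : MvPolynomial (Fin r) k} (hL1 : L.IsHomogeneous 1)
    (hLinj : ∀ x ∈ quotPiece k (Fin r) I 1, Ideal.Quotient.mk I L * x = 0 → x = 0) :
    ∀ i : ℕ, 1 ≤ i → quotPiece k (Fin r) I (i + 1) ≤
      Submodule.map (LinearMap.mulLeft k (Ideal.Quotient.mk I L))
        (quotPiece k (Fin r) I i) := by
  have hLmem : Ideal.Quotient.mk I L ∈ quotPiece k (Fin r) I 1 :=
    mem_quotPiece_iff.mpr ⟨L, hL1, rfl⟩
  intro i hi
  induction i, hi using Nat.le_induction with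
  | base =>
    have hmaps : ∀ x ∈ quotPiece k (Fin r) I 1,
        (LinearMap.mulLeft k (Ideal.Quotient.mk I L)) x ∈ quotPiece k (Fin r) I 2 := by
      intro x hx
      rw [LinearMap.mulLeft_apply]
      exact mul_mem_quotPiece hLmem hx
    set g := (LinearMap.mulLeft k (Ideal.Quotient.mk I L)).restrict hmaps with hg
    have hker : ∀ x, g x = 0 → x = 0 := by
      intro x hx
      have hx' : Ideal.Quotient.mk I L * (x : MvPolynomial (Fin r) k ⧸ I) = 0 := by
        have := congrArg Subtype.val hx
        simpa [hg, LinearMap.restrict_apply] using this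
      exact Subtype.ext (hLinj _ x.2 hx')
    have ginj : Function.Injective g :=
      LinearMap.ker_eq_bot.mp (LinearMap.ker_eq_bot'.mpr hker)
    have hrange : LinearMap.range g = ⊤ := by
      apply Submodule.eq_top_of_finrank_eq
      rw [LinearMap.finrank_range_of_inj ginj]
      show hilb k (Fin r) I 1 = hilb k (Fin r) I 2
      rw [h1, h2]
    intro y hy
    obtain ⟨x, hx⟩ := LinearMap.range_eq_top.mp hrange ⟨y, hy⟩
    refine ⟨x, x.2, ?_⟩
    have := congrArg Subtype.val hx
    simpa [hg, LinearMap.restrict_apply] using this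
  | succ n hn IH =>
    intro y hy
    rw [mem_quotPiece_iff] at hy
    obtain ⟨p, hp, rfl⟩ := hy
    rw [p.as_sum, map_sum]
    apply Submodule.sum_mem
    intro m hm
    have hdeg : m.degree = n + 1 + 1 := by
      by_contra h
      exact (MvPolynomial.mem_support_iff.mp hm) (hp.coeff_eq_zero h)
    have hex : ∃ l, m l ≠ 0 := by
      by_contra h
      push_neg at h
      have hm0 : m = 0 := Finsupp.ext fun l => h l
      rw [hm0] at hdeg
      simp at hdeg
    obtain ⟨l, hl⟩ := hex
    set m' := m - Finsupp.single l 1 with hm'def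
    have hm' : Finsupp.single l 1 + m' = m :=
      add_tsub_cancel_of_le (Finsupp.single_le_iff.mpr (Nat.one_le_iff_ne_zero.mpr hl))
    have hsd : (Finsupp.single l (1 : ℕ)).degree = 1 := by
      simp [Finsupp.degree_single]
    have hdm' : m'.degree = n + 1 := by
      have := degree_add' (Finsupp.single l 1) m'
      rw [hm', hdeg, hsd] at this
      omega
    have hmono : Ideal.Quotient.mk I (monomial m' (coeff m p)) ∈ quotPiece k (Fin r) I (n + 1) :=
      mem_quotPiece_iff.mpr ⟨_, isHomogeneous_monomial _ hdm', rfl⟩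
    obtain ⟨x, hx, hxe⟩ := IH hmono
    have hXx : Ideal.Quotient.mk I (X l) * x ∈ quotPiece k (Fin r) I (n + 1) := by
      have hXl : Ideal.Quotient.mk I (X l) ∈ quotPiece k (Fin r) I 1 :=
        mem_quotPiece_iff.mpr ⟨X l, isHomogeneous_X _ _, rfl⟩
      have := mul_mem_quotPiece hXl hx
      rwa [Nat.add_comm] at this
    refine ⟨Ideal.Quotient.mk I (X l) * x, hXx, ?_⟩
    rw [LinearMap.mulLeft_apply] at hxe ⊢
    have hfact : monomial m (coeff m p) = X l * monomial m' (coeff m p) := by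
      rw [← hm', monomial_single_add, pow_one]
    rw [hfact, map_mul, ← hxe]
    ring

end Aux

/-- Let `R/I` be an artinian Gorenstein algebra for which multiplication by
a (general) linear form from degree 1 to degree 2 is injective, with `h_1 = h_2 = r` and
socle degree `e ≥ 4`. Then `h_i = r` for all `i = 1, ..., e-1`. -/
theorem stmt_18 (k : Type*) [Field k] (r e : ℕ) (he4 : 4 ≤ e)
    (I : Ideal (MvPolynomial (Fin r) k))
    (hhom : IsHomog k (Fin r) I)
    (hart : ArtinianHF k (Fin r) I) (hgor : GorensteinHF k (Fin r) I)
    (he : IsSocleDegree k (Fin r) I e)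
    (h1 : hilb k (Fin r) I 1 = r) (h2 : hilb k (Fin r) I 2 = r)
    (hinj : ∃ L : MvPolynomial (Fin r) k, L.IsHomogeneous 1 ∧ L ≠ 0 ∧
      ∀ x ∈ quotPiece k (Fin r) I 1, Ideal.Quotient.mk I L * x = 0 → x = 0) :
    ∀ i : ℕ, 1 ≤ i → i ≤ e - 1 → hilb k (Fin r) I i = r := by
    classical
  obtain ⟨L, hL1, hL0, hLinj⟩ := hinj
  have hmono : ∀ i : ℕ, 1 ≤ i → hilb k (Fin r) I (i + 1) ≤ hilb k (Fin r) I i := by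
    intro i hi
    have hle := piece_le_map he h1 h2 hL1 hLinj i hi
    calc hilb k (Fin r) I (i + 1)
        ≤ Module.finrank k (Submodule.map (LinearMap.mulLeft k (Ideal.Quotient.mk I L))
            (quotPiece k (Fin r) I i)) := Submodule.finrank_mono hle
      _ ≤ hilb k (Fin r) I i := Submodule.finrank_map_le _ _
  have hanti : ∀ a b : ℕ, 1 ≤ a → a ≤ b → hilb k (Fin r) I b ≤ hilb k (Fin r) I a := by
    intro a b ha hab
    induction b, hab using Nat.le_induction with
    | base => exact le_refl _
    | succ n hn IH => exact le_trans (hmono n (le_trans ha hn)) IH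
  intro i hi1 hie
  have d1 : hilb k (Fin r) I 1 ≤ hilb k (Fin r) I (e - 1) :=
    hilb_le_dual hhom hgor he (by omega)
  have hi_le : hilb k (Fin r) I i ≤ hilb k (Fin r) I 1 := hanti 1 i le_rfl hi1
  have he_le : hilb k (Fin r) I (e - 1) ≤ hilb k (Fin r) I i := hanti i (e - 1) hi1 hie
  omega
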